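/- Let X, Y be complex Hilbert spaces, T : X → X power bounded with constant c₀, C : X → Y bounded, α > -1, and suppose ∑_{k=1}^∞ k^α ‖C T^{k-1} x‖² ≤ M² ‖x‖² for all x. Let m be a nonnegative integer. Then for every ω in the open unit disc and every x ∈ X, ‖C (I - ωT)^{-(m+1)} x‖ ≤ (1/m!) (∑_{k=1}^∞ k^α ‖C T^{k-1} x‖²)^{1/2} (∑_{k=1}^∞ c_k² |ω|^{2(k-1)})^{1/2}, where c_k = k(k+1)⋯(k+m-1)/k^{α/2}. -/

import Mathlib

open Filter Finset Topology

/-- `(n+1)^K * q^n` is summable for `0 ≤ q < 1`. -/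
lemma aux_summable_pow_mul_geom (K : ℕ) {q : ℝ} (hq0 : 0 ≤ q) (hq1 : q < 1) :
    Summable (fun n : ℕ => ((n : ℝ) + 1) ^ K * q ^ n) := by
  have h : ∀ n : ℕ, ((n : ℝ) + 1) ^ K * q ^ n
      = ∑ j ∈ Finset.range (K + 1), ((n : ℝ) ^ j * q ^ n) * (K.choose j : ℝ) := by
    intro n
    rw [add_pow, Finset.sum_mul]
    congr 1
    ext j
    simp [mul_comm, mul_assoc, mul_left_comm]
  apply Summable.congr _ (fun n => (h n).symm)
  apply summable_sum
  intro j hj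
  have : Summable (fun n : ℕ => (n : ℝ) ^ j * q ^ n) := by
    apply summable_pow_mul_geometric_of_norm_lt_one
    rwa [Real.norm_eq_abs, abs_of_nonneg hq0]
  exact this.mul_right _

lemma aux_choose_le_pow (n k : ℕ) :
    ((n + k).choose k : ℝ) ≤ ((k : ℝ) + 1) ^ k * ((n : ℝ) + 1) ^ k := by
  have h1 : (n + k).choose k ≤ (n + k) ^ k := Nat.choose_le_pow _ _
  have h2 : (n + k) ^ k ≤ ((k + 1) * (n + 1)) ^ k := Nat.pow_le_pow_left (by nlinarith) _
  calc ((n + k).choose k : ℝ) ≤ (((k + 1) * (n + 1)) ^ k : ℕ) := by exact_mod_cast h1.trans h2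
    _ = ((k : ℝ) + 1) ^ k * ((n : ℝ) + 1) ^ k := by
        push_cast
        rw [← mul_pow]

/-- Geometric series for an element with summable powers. -/
lemma aux_hasSum_geom {R : Type*} [NormedRing R] [CompleteSpace R] {r : R}
    (hs : Summable fun n : ℕ => ‖r ^ n‖) :
    HasSum (fun n : ℕ => r ^ n) (Ring.inverse (1 - r)) := by
  have hsum : Summable fun n : ℕ => r ^ n := hs.of_norm
  have h0 : Filter.Tendsto (fun n : ℕ => r ^ n) Filter.atTop (nhds 0) :=
    hsum.tendsto_atTop_zero
  have hlim : Filter.Tendsto (fun n : ℕ => 1 - r ^ n) Filter.atTop (nhds 1) := by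
    simpa using tendsto_const_nhds.sub h0
  have h1 : (∑' n : ℕ, r ^ n) * (1 - r) = 1 := by
    have := hsum.hasSum.mul_right (1 - r)
    refine tendsto_nhds_unique this.tendsto_sum_nat ?_
    convert ← hlim with n
    rw [← geom_sum_mul_neg, Finset.sum_mul]
  have h2 : (1 - r) * (∑' n : ℕ, r ^ n) = 1 := by
    have := hsum.hasSum.mul_left (1 - r)
    refine tendsto_nhds_unique this.tendsto_sum_nat ?_
    convert ← hlim with n
    rw [← mul_neg_geom_sum, Finset.mul_sum]
  have hinv : Ring.inverse (1 - r) = ∑' n : ℕ, r ^ n := by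
    have : Ring.inverse ((⟨1 - r, ∑' n : ℕ, r ^ n, h2, h1⟩ : Rˣ) : R)
        = ((⟨1 - r, ∑' n : ℕ, r ^ n, h2, h1⟩ : Rˣ)⁻¹ : Rˣ) := Ring.inverse_unit _
    simpa using this
  rw [hinv]
  exact hsum.hasSum

/-- Expansion of `(1-r)⁻¹ ^ (k+1)` for `r` with geometrically bounded powers. -/
lemma aux_hasSum_choose {R : Type*} [NormedRing R] [CompleteSpace R] {r : R} {c q : ℝ}
    (hq0 : 0 ≤ q) (hq1 : q < 1) (hb : ∀ n : ℕ, ‖r ^ n‖ ≤ c * q ^ n) (k : ℕ) :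
    HasSum (fun n : ℕ => ((n + k).choose k : R) * r ^ n) (Ring.inverse (1 - r) ^ (k + 1)) := by
  have hc0 : 0 ≤ c := le_trans (norm_nonneg (r ^ 0)) (by simpa using hb 0)
  have hgeom : Summable fun n : ℕ => c * q ^ n :=
    (summable_geometric_of_lt_one hq0 hq1).mul_left c
  have hs : Summable fun n : ℕ => ‖r ^ n‖ :=
    Summable.of_nonneg_of_le (fun n => norm_nonneg _) hb hgeom
  induction k with
  | zero => simpa using aux_hasSum_geom hs
  | succ k ih =>
    have I1 : Summable fun n : ℕ => ‖((n + k).choose k : R) * r ^ n‖ := by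
      refine Summable.of_nonneg_of_le (fun n => norm_nonneg _) (fun n => ?_)
        (((aux_summable_pow_mul_geom k hq0 hq1).mul_left
          (((k : ℝ) + 1) ^ k * ‖(1 : R)‖ * c)))
      calc ‖((n + k).choose k : R) * r ^ n‖
          ≤ ‖((n + k).choose k : R)‖ * ‖r ^ n‖ := norm_mul_le _ _
        _ ≤ (((n + k).choose k : ℝ) * ‖(1 : R)‖) * (c * q ^ n) := by
            apply mul_le_mul (Nat.norm_cast_le _) (hb n) (norm_nonneg _)
            positivity
        _ ≤ ((((k : ℝ) + 1) ^ k * ((n : ℝ) + 1) ^ k) * ‖(1 : R)‖) * (c * q ^ n) := by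
            have := aux_choose_le_pow n k
            gcongr
        _ = (((k : ℝ) + 1) ^ k * ‖(1 : R)‖ * c) * (((n : ℝ) + 1) ^ k * q ^ n) := by ring
    have I1' : Summable fun n : ℕ => ((n + k).choose k : R) * r ^ n := I1.of_norm
    have H := hasSum_sum_range_mul_of_summable_norm' I1 I1' hs hs.of_norm
    convert H using 1 with n
    · funext n
      have he : ∑ i ∈ Finset.range (n + 1), ((i + k).choose k : R) * r ^ i * r ^ (n - i) =
          ∑ i ∈ Finset.range (n + 1), ((i + k).choose k : R) * r ^ n := by
        apply Finset.sum_congr rfl (fun i hi => ?_)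
        simp only [Finset.mem_range] at hi
        rw [mul_assoc, ← pow_add, show i + (n - i) = n by omega]
      simp [he, ← Finset.sum_mul, ← Nat.cast_sum, Nat.sum_range_add_choose n k, add_assoc]
    · rw [ih.tsum_eq, (aux_hasSum_geom hs).tsum_eq, pow_succ]

/-- Product formula for the coefficients. -/
lemma aux_prod_eq (n m : ℕ) :
    (∏ i ∈ Finset.range m, (((n : ℝ) + 1) + (i : ℝ)))
      = (m.factorial : ℝ) * ((n + m).choose m : ℝ) := by
  have hnat : ∏ i ∈ Finset.range m, (n + 1 + i) = (n + 1).ascFactorial m := by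
    induction m with
    | zero => simp
    | succ m ih => rw [Finset.prod_range_succ, ih, Nat.ascFactorial_succ]; ring
  have h2 := Nat.ascFactorial_eq_factorial_mul_choose n m
  calc (∏ i ∈ Finset.range m, (((n : ℝ) + 1) + (i : ℝ)))
      = ((∏ i ∈ Finset.range m, (n + 1 + i) : ℕ) : ℝ) := by push_cast; ring_nf
    _ = (m.factorial : ℝ) * ((n + m).choose m : ℝ) := by rw [hnat, h2]; push_cast; ring

/-- Bound: `(n+m).choose m ≤ (n+1)^m` over the reals. -/
lemma aux_choose_le_pow' (n m : ℕ) : ((n + m).choose m : ℝ) ≤ ((n : ℝ) + 1) ^ m := by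
  have hfac : (0 : ℝ) < (m.factorial : ℝ) := by exact_mod_cast m.factorial_pos
  rw [← mul_le_mul_iff_right₀ hfac, ← aux_prod_eq n m]
  calc (∏ i ∈ Finset.range m, (((n : ℝ) + 1) + (i : ℝ)))
      ≤ ∏ i ∈ Finset.range m, (((n : ℝ) + 1) * ((i : ℝ) + 1)) := by
        apply Finset.prod_le_prod
        · intro i _; positivity
        · intro i _
          nlinarith [Nat.cast_nonneg (α := ℝ) n, Nat.cast_nonneg (α := ℝ) i]
    _ = ((n : ℝ) + 1) ^ m * ∏ i ∈ Finset.range m, ((i : ℝ) + 1) := by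
        rw [Finset.prod_mul_distrib, Finset.prod_const, Finset.card_range]
    _ = (m.factorial : ℝ) * ((n : ℝ) + 1) ^ m := by
        have : (∏ i ∈ Finset.range m, ((i : ℝ) + 1))
            = ((∏ i ∈ Finset.range m, (i + 1) : ℕ) : ℝ) := by push_cast; ring
        rw [this, Finset.prod_range_add_one_eq_factorial]
        ring

theorem stmt10 {X Y : Type*}
    [NormedAddCommGroup X] [InnerProductSpace ℂ X] [CompleteSpace X]
    [NormedAddCommGroup Y] [InnerProductSpace ℂ Y] [CompleteSpace Y]
    (T : X →L[ℂ] X) (c₀ : ℝ) (hT : ∀ k : ℕ, ‖T ^ k‖ ≤ c₀)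
    (C : X →L[ℂ] Y) (α : ℝ) (hα : α > -1) (M : ℝ)
    (hsum : ∀ x : X, Summable (fun k : ℕ => ((k : ℝ) + 1) ^ α * ‖C (T ^ k <| x)‖ ^ 2))
    (hadm : ∀ x : X, (∑' k : ℕ, ((k : ℝ) + 1) ^ α * ‖C (T ^ k <| x)‖ ^ 2) ≤ M ^ 2 * ‖x‖ ^ 2)
    (m : ℕ)
    (c : ℕ → ℝ)
    (hc : ∀ k : ℕ, 1 ≤ k →
      c k = (∏ i ∈ Finset.range m, ((k : ℝ) + (i : ℝ))) / (k : ℝ) ^ (α / 2)) :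
    ∀ ω : ℂ, ‖ω‖ < 1 → ∀ x : X,
      ‖C (((Ring.inverse (1 - ω • T)) ^ (m + 1)) x)‖ ≤
        (1 / (m.factorial : ℝ)) *
          (∑' k : ℕ, ((k : ℝ) + 1) ^ α * ‖C (T ^ k <| x)‖ ^ 2) ^ ((1 : ℝ) / 2) *
          (∑' k : ℕ, (c (k + 1)) ^ 2 * ‖ω‖ ^ (2 * k)) ^ ((1 : ℝ) / 2) := by
  intro ω hω x
  have hq0 : (0 : ℝ) ≤ ‖ω‖ := norm_nonneg ω
  have hc₀ : 0 ≤ c₀ := le_trans (norm_nonneg _) (hT 0)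
  have hb : ∀ n : ℕ, ‖(ω • T) ^ n‖ ≤ c₀ * ‖ω‖ ^ n := by
    intro n
    rw [smul_pow, norm_smul, norm_pow]
    calc ‖ω‖ ^ n * ‖T ^ n‖ ≤ ‖ω‖ ^ n * c₀ :=
          mul_le_mul_of_nonneg_left (hT n) (by positivity)
      _ = c₀ * ‖ω‖ ^ n := by rw [mul_comm]
  have key := aux_hasSum_choose hq0 hω hb m
  have key2 : HasSum
      (fun n : ℕ => C (((((n + m).choose m : ℕ) : X →L[ℂ] X) * (ω • T) ^ n) x))
      (C (((Ring.inverse (1 - ω • T)) ^ (m + 1)) x)) := by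
    have := (C.comp (ContinuousLinearMap.apply ℂ X x)).hasSum key
    simpa using this
  have hterm : ∀ n : ℕ, C (((((n + m).choose m : ℕ) : X →L[ℂ] X) * (ω • T) ^ n) x)
      = ((((n + m).choose m : ℕ) : ℂ) * ω ^ n) • C ((T ^ n) x) := by
    intro n
    rw [ContinuousLinearMap.mul_apply, ContinuousLinearMap.natCast_apply, smul_pow,
      ContinuousLinearMap.smul_apply, map_nsmul, map_smul, ← Nat.cast_smul_eq_nsmul ℂ,
      smul_smul]
  have hnorm : ∀ n : ℕ, ‖C (((((n + m).choose m : ℕ) : X →L[ℂ] X) * (ω • T) ^ n) x)‖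
      = (((n + m).choose m : ℕ) : ℝ) * ‖ω‖ ^ n * ‖C ((T ^ n) x)‖ := by
    intro n
    rw [hterm n, norm_smul, norm_mul, norm_pow]
    simp
  -- Cauchy–Schwarz setup
  set a : ℕ → ℝ := fun n => ((n : ℝ) + 1) ^ (α / 2) * ‖C ((T ^ n) x)‖ with ha
  set b : ℕ → ℝ := fun n => c (n + 1) * ‖ω‖ ^ n with hbdef
  have hP : ∀ n : ℕ, (0 : ℝ) < ((n : ℝ) + 1) ^ (α / 2) :=
    fun n => Real.rpow_pos_of_pos (by positivity) _
  have hcval : ∀ n : ℕ, c (n + 1)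
      = ((m.factorial : ℝ) * ((n + m).choose m : ℝ)) / ((n : ℝ) + 1) ^ (α / 2) := by
    intro n
    rw [hc (n + 1) (by omega), ← aux_prod_eq n m]
    push_cast
    ring_nf
  have hc_nonneg : ∀ n : ℕ, 0 ≤ c (n + 1) := by
    intro n
    rw [hcval n]
    have := hP n
    positivity
  have hb_nonneg : ∀ n, 0 ≤ b n := by
    intro n
    have := hc_nonneg n
    simp only [hbdef]
    positivity
  have ha_nonneg : ∀ n, 0 ≤ a n := fun n => by simp only [ha]; positivity
  have hab : ∀ n : ℕ, (1 / (m.factorial : ℝ)) * (a n * b n)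
      = (((n + m).choose m : ℕ) : ℝ) * ‖ω‖ ^ n * ‖C ((T ^ n) x)‖ := by
    intro n
    simp only [ha, hbdef]
    rw [hcval n]
    have hPn := (hP n).ne'
    have hfac : ((m.factorial : ℝ)) ≠ 0 := by exact_mod_cast m.factorial_ne_zero
    field_simp
  have ha2 : ∀ n : ℕ, a n ^ (2 : ℝ) = ((n : ℝ) + 1) ^ α * ‖C ((T ^ n) x)‖ ^ 2 := by
    intro n
    rw [show (2 : ℝ) = ((2 : ℕ) : ℝ) by norm_num, Real.rpow_natCast]
    simp only [ha]
    rw [mul_pow, ← Real.rpow_natCast (((n : ℝ) + 1) ^ (α / 2)) 2,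
      ← Real.rpow_mul (by positivity)]
    norm_num
  have hb2 : ∀ n : ℕ, b n ^ (2 : ℝ) = (c (n + 1)) ^ 2 * ‖ω‖ ^ (2 * n) := by
    intro n
    rw [show (2 : ℝ) = ((2 : ℕ) : ℝ) by norm_num, Real.rpow_natCast]
    simp only [hbdef]
    rw [mul_pow, ← pow_mul, mul_comm n 2]
  have hasum : Summable (fun n : ℕ => a n ^ (2 : ℝ)) :=
    Summable.congr (hsum x) (fun n => (ha2 n).symm)
  have hcle : ∀ n : ℕ, c (n + 1) ≤ (m.factorial : ℝ) * ((n : ℝ) + 1) ^ (m + 1) := by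
    intro n
    rw [hcval n, div_le_iff₀ (hP n)]
    have h1 : ((n + m).choose m : ℝ) ≤ ((n : ℝ) + 1) ^ m := aux_choose_le_pow' n m
    have h2 : (1 : ℝ) ≤ ((n : ℝ) + 1) ^ (α / 2) * ((n : ℝ) + 1) := by
      have h3 : ((n : ℝ) + 1) ^ (-(1 : ℝ)) ≤ ((n : ℝ) + 1) ^ (α / 2) := by
        apply Real.rpow_le_rpow_of_exponent_le (by norm_num) (by linarith)
      have h4 : ((n : ℝ) + 1) ^ (-(1 : ℝ)) = (((n : ℝ) + 1))⁻¹ := by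
        rw [Real.rpow_neg (by positivity), Real.rpow_one]
      rw [h4] at h3
      have h5 : (0 : ℝ) < (n : ℝ) + 1 := by positivity
      calc (1 : ℝ) = (((n : ℝ) + 1))⁻¹ * ((n : ℝ) + 1) := by field_simp
        _ ≤ ((n : ℝ) + 1) ^ (α / 2) * ((n : ℝ) + 1) := by gcongr
    calc (m.factorial : ℝ) * ((n + m).choose m : ℝ)
        ≤ (m.factorial : ℝ) * ((n : ℝ) + 1) ^ m := by
          have : (0 : ℝ) ≤ (m.factorial : ℝ) := by positivity
          gcongr
      _ = ((m.factorial : ℝ) * ((n : ℝ) + 1) ^ m) * 1 := by ring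
      _ ≤ ((m.factorial : ℝ) * ((n : ℝ) + 1) ^ m)
            * (((n : ℝ) + 1) ^ (α / 2) * ((n : ℝ) + 1)) := by
          have : (0 : ℝ) ≤ (m.factorial : ℝ) * ((n : ℝ) + 1) ^ m := by positivity
          gcongr
      _ = (m.factorial : ℝ) * ((n : ℝ) + 1) ^ (m + 1) * ((n : ℝ) + 1) ^ (α / 2) := by
          ring
  have hbsum : Summable (fun n : ℕ => b n ^ (2 : ℝ)) := by
    have hq2 : ‖ω‖ ^ 2 < 1 := by nlinarith
    have hq20 : (0 : ℝ) ≤ ‖ω‖ ^ 2 := by positivity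
    refine Summable.of_nonneg_of_le
      (fun n => by rw [hb2 n]; positivity) (fun n => ?_)
      ((aux_summable_pow_mul_geom (2 * (m + 1)) hq20 hq2).mul_left ((m.factorial : ℝ) ^ 2))
    rw [hb2 n]
    calc (c (n + 1)) ^ 2 * ‖ω‖ ^ (2 * n)
        ≤ ((m.factorial : ℝ) * ((n : ℝ) + 1) ^ (m + 1)) ^ 2 * ‖ω‖ ^ (2 * n) := by
          gcongr
          · exact hc_nonneg n
          · exact hcle n
      _ = (m.factorial : ℝ) ^ 2 * (((n : ℝ) + 1) ^ (2 * (m + 1)) * (‖ω‖ ^ 2) ^ n) := by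
          have e1 : ((n : ℝ) + 1) ^ (2 * (m + 1)) = (((n : ℝ) + 1) ^ (m + 1)) ^ 2 := by
            rw [← pow_mul, mul_comm]
          have e2 : (‖ω‖ ^ 2) ^ n = ‖ω‖ ^ (2 * n) := by rw [← pow_mul, mul_comm]
          rw [e1, e2, mul_pow]
          ring
  have hCS := Real.summable_and_inner_le_Lp_mul_Lq_tsum_of_nonneg (f := a) (g := b)
    (p := 2) (q := 2) ⟨by norm_num, by norm_num, by norm_num⟩ ha_nonneg hb_nonneg hasum hbsum
  obtain ⟨hSab, hle⟩ := hCS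
  have hfacpos : (0 : ℝ) < (m.factorial : ℝ) := by exact_mod_cast m.factorial_pos
  have hgsum : Summable
      (fun n : ℕ => ‖C (((((n + m).choose m : ℕ) : X →L[ℂ] X) * (ω • T) ^ n) x)‖) := by
    apply Summable.congr (hSab.mul_left (1 / (m.factorial : ℝ)))
    intro n
    rw [hnorm n, ← hab n]
  have heq : C (((Ring.inverse (1 - ω • T)) ^ (m + 1)) x)
      = ∑' n : ℕ, C (((((n + m).choose m : ℕ) : X →L[ℂ] X) * (ω • T) ^ n) x) :=
    key2.tsum_eq.symm
  rw [heq]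
  have hA : (∑' k : ℕ, ((k : ℝ) + 1) ^ α * ‖C (T ^ k <| x)‖ ^ 2)
      = ∑' n : ℕ, a n ^ (2 : ℝ) := tsum_congr (fun n => (ha2 n).symm)
  have hB : (∑' k : ℕ, (c (k + 1)) ^ 2 * ‖ω‖ ^ (2 * k))
      = ∑' n : ℕ, b n ^ (2 : ℝ) := tsum_congr (fun n => (hb2 n).symm)
  rw [hA, hB]
  calc ‖∑' n : ℕ, C (((((n + m).choose m : ℕ) : X →L[ℂ] X) * (ω • T) ^ n) x)‖
      ≤ ∑' n : ℕ, ‖C (((((n + m).choose m : ℕ) : X →L[ℂ] X) * (ω • T) ^ n) x)‖ :=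
        norm_tsum_le_tsum_norm hgsum
    _ = ∑' n : ℕ, (1 / (m.factorial : ℝ)) * (a n * b n) :=
        tsum_congr (fun n => by rw [hnorm n, ← hab n])
    _ = (1 / (m.factorial : ℝ)) * ∑' n : ℕ, a n * b n := tsum_mul_left
    _ ≤ (1 / (m.factorial : ℝ))
          * ((∑' n : ℕ, a n ^ (2 : ℝ)) ^ ((1 : ℝ) / 2)
            * (∑' n : ℕ, b n ^ (2 : ℝ)) ^ ((1 : ℝ) / 2)) := by
        apply mul_le_mul_of_nonneg_left _ (by positivity)
        exact hle
    _ = (1 / (m.factorial : ℝ)) * (∑' n : ℕ, a n ^ (2 : ℝ)) ^ ((1 : ℝ) / 2)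
          * (∑' n : ℕ, b n ^ (2 : ℝ)) ^ ((1 : ℝ) / 2) := by ring
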